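/- For the Galerkin discretization of the Robin-coupled problem with V_h ⊂ V and Λ_h ⊂ Q, the error satisfies, with C independent of α: ‖u−u_h‖²_V + ‖λ−λ_h‖²_Λ + α‖λ−λ_h‖²_Q ≤ C(inf_{v_h∈V_h}‖u−v_h‖²_V + inf_{μ_h∈Λ_h}‖λ−μ_h‖²_Λ + α inf_{μ_h∈Λ_h}‖λ−μ_h‖²_Q). -/

import Mathlib

/- STATEMENT 14: Error estimate, uniform in α, for the Galerkin discretization of the
Robin-coupled problem with V_h ⊂ V and Λ_h ⊂ Q:
‖u−u_h‖²_V + ‖λ−λ_h‖²_Λ + α‖λ−λ_h‖²_Q ≤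
  C (inf_{v_h}‖u−v_h‖²_V + inf_{μ_h}‖λ−μ_h‖²_Λ + α inf_{μ_h}‖λ−μ_h‖²_Q),
with C independent of α. `V`, `Lam`, `Q` as before (Q ⊂ Λ via ι, c = inner product
of Q); a continuous (α₁) and coercive (α₂); b continuous (M) with discrete inf-sup
constant β over V_h × Λ_h in the Λ-norm. -/
set_option maxHeartbeats 1000000 in
theorem stmt_14 {V Lam Q : Type*}
    [NormedAddCommGroup V] [NormedSpace ℝ V]
    [NormedAddCommGroup Lam] [NormedSpace ℝ Lam]
    [NormedAddCommGroup Q] [InnerProductSpace ℝ Q]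
    (ι : Q →ₗ[ℝ] Lam)
    (a : V →ₗ[ℝ] V →ₗ[ℝ] ℝ) (b : Lam →ₗ[ℝ] V →ₗ[ℝ] ℝ)
    (α₁ α₂ M β : ℝ) (hα₁ : 0 < α₁) (hα₂ : 0 < α₂) (hM : 0 < M) (hβ : 0 < β)
    (ha_cont : ∀ u v : V, a u v ≤ α₁ * ‖u‖ * ‖v‖)
    (ha_coer : ∀ u : V, α₂ * ‖u‖ ^ 2 ≤ a u u)
    (hb_cont : ∀ (μ : Lam) (v : V), b μ v ≤ M * ‖μ‖ * ‖v‖)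
    (Vh : Submodule ℝ V) (Lh : Submodule ℝ Q)
    (hb_infsup_h : ∀ μh ∈ Lh, ∀ ε > 0,
      ∃ vh ∈ Vh, ‖vh‖ ≤ 1 ∧ β * ‖ι μh‖ - ε ≤ b (ι μh) vh) :
    ∃ C : ℝ, 0 < C ∧ ∀ α : ℝ, 0 < α → ∀ (F : V →L[ℝ] ℝ) (u uh : V) (lam lamh : Q),
      (∀ v : V, a u v - b (ι lam) v = F v) →
      (∀ μ : Q, b (ι μ) u + α * (inner ℝ lam μ : ℝ) = 0) →
      uh ∈ Vh → lamh ∈ Lh →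
      (∀ vh ∈ Vh, a uh vh - b (ι lamh) vh = F vh) →
      (∀ μh ∈ Lh, b (ι μh) uh + α * (inner ℝ lamh μh : ℝ) = 0) →
      ∀ vh ∈ Vh, ∀ μh ∈ Lh,
        ‖u - uh‖ ^ 2 + ‖ι (lam - lamh)‖ ^ 2 + α * ‖lam - lamh‖ ^ 2 ≤
          C * (‖u - vh‖ ^ 2 + ‖ι (lam - μh)‖ ^ 2 + α * ‖lam - μh‖ ^ 2) := by
  refine ⟨((β^2+2*α₁^2+α₂*β^2)*(4*((β+M)*α₁)^2 + 2*α₂*β*(M*(M+β)) + 4*(β*M)^2)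
      + 4*α₂^2*β^2*(M+β)^2 + 2*α₂*β^4 + 4*α₁^2*α₂*β^2 + 2*α₂^2*β^4) / (2*α₂^2*β^4),
    by positivity, ?_⟩
  intro α hα F u uh lam lamh hc1 hc2 huh hlamh hd1 hd2 vh hvh μh hμh
  set X := ‖u - uh‖ with hXdef
  set Y := ‖lam - lamh‖ with hYdef
  set Z := ‖ι (lam - lamh)‖ with hZdef
  set p := ‖u - vh‖ with hpdef
  set q := ‖ι (lam - μh)‖ with hqdef
  set r := ‖lam - μh‖ with hrdef
  have hXn : (0:ℝ) ≤ X := norm_nonneg _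
  have hYn : (0:ℝ) ≤ Y := norm_nonneg _
  have hZn : (0:ℝ) ≤ Z := norm_nonneg _
  have hpn : (0:ℝ) ≤ p := norm_nonneg _
  have hqn : (0:ℝ) ≤ q := norm_nonneg _
  have hrn : (0:ℝ) ≤ r := norm_nonneg _
  -- Galerkin orthogonality, first equation
  have hg1 : ∀ w ∈ Vh, a (u - uh) w = b (ι (lam - lamh)) w := by
    intro w hw
    have h1 := hc1 w
    have h2 := hd1 w hw
    simp only [map_sub, LinearMap.sub_apply] at h1 h2 ⊢
    linarith
  -- Galerkin orthogonality, second equation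
  have hg2 : ∀ μ ∈ Lh, b (ι μ) (u - uh) + α * (inner ℝ (lam - lamh) μ : ℝ) = 0 := by
    intro μ hμ
    have h1 := hc2 μ
    have h2 := hd2 μ hμ
    simp only [map_sub, LinearMap.sub_apply, inner_sub_left] at h1 h2 ⊢
    linarith
  -- inf-sup bound : β Z ≤ α₁ X + (M+β) q
  have hB' : β * ‖ι (μh - lamh)‖ ≤ α₁ * X + M * q := by
    apply le_of_forall_pos_le_add
    intro ε hε
    obtain ⟨w, hwVh, hw1, hwb⟩ := hb_infsup_h (μh - lamh) (Lh.sub_mem hμh hlamh) ε hε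
    have hgo := hg1 w hwVh
    have key : b (ι (μh - lamh)) w = a (u - uh) w - b (ι (lam - μh)) w := by
      simp only [map_sub, LinearMap.sub_apply] at hgo ⊢
      linarith
    have h1 : a (u - uh) w ≤ α₁ * X := by
      have h := ha_cont (u - uh) w
      nlinarith [mul_nonneg (mul_nonneg hα₁.le hXn) (sub_nonneg.mpr hw1)]
    have h2 : -b (ι (lam - μh)) w ≤ M * q := by
      have hflip : ι (μh - lam) = -(ι (lam - μh)) := by rw [← map_neg]; congr 1; abel
      have h := hb_cont (ι (μh - lam)) w
      rw [hflip] at h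
      simp only [map_neg, LinearMap.neg_apply, norm_neg] at h
      nlinarith [mul_nonneg (mul_nonneg hM.le hqn) (sub_nonneg.mpr hw1)]
    linarith
  have hB : β * Z ≤ α₁ * X + (M + β) * q := by
    have hsplit : ι (lam - lamh) = ι (lam - μh) + ι (μh - lamh) := by
      rw [← map_add]; congr 1; abel
    have htri : Z ≤ q + ‖ι (μh - lamh)‖ := by
      rw [hZdef, hsplit]; exact norm_add_le _ _
    nlinarith [mul_le_mul_of_nonneg_left htri hβ.le]
  -- coercivity estimate
  have hgo1 : a (u - uh) (vh - uh) = b (ι (lam - lamh)) (vh - uh) :=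
    hg1 _ (Vh.sub_mem hvh huh)
  have hgo2 : b (ι (μh - lamh)) (u - uh) + α * (inner ℝ (lam - lamh) (μh - lamh) : ℝ) = 0 :=
    hg2 _ (Lh.sub_mem hμh hlamh)
  have hid : a (u - uh) (u - uh) + α * (inner ℝ (lam - lamh) (lam - lamh) : ℝ) =
      a (u - uh) (u - vh) + α * (inner ℝ (lam - lamh) (lam - μh) : ℝ)
        - b (ι (lam - lamh)) (u - vh) + b (ι (lam - μh)) (u - uh) := by
    simp only [map_sub, LinearMap.sub_apply, inner_sub_left, inner_sub_right] at hgo1 hgo2 ⊢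
    linarith
  have hcoer : α₂ * X ^ 2 ≤ a (u - uh) (u - uh) := ha_coer _
  have hinner : (inner ℝ (lam - lamh) (lam - lamh) : ℝ) = Y ^ 2 :=
    real_inner_self_eq_norm_sq _
  have hCS : (inner ℝ (lam - lamh) (lam - μh) : ℝ) ≤ Y * r := real_inner_le_norm _ _
  have ha1 : a (u - uh) (u - vh) ≤ α₁ * X * p := ha_cont _ _
  have hb2 : b (ι (lam - μh)) (u - uh) ≤ M * q * X := hb_cont _ _
  have hb1 : -b (ι (lam - lamh)) (u - vh) ≤ M * Z * p := by
    have hflip : ι (lamh - lam) = -(ι (lam - lamh)) := by rw [← map_neg]; congr 1; abel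
    have h := hb_cont (ι (lamh - lam)) (u - vh)
    rw [hflip] at h
    simp only [map_neg, LinearMap.neg_apply, norm_neg] at h
    linarith
  have hA : α₂ * X ^ 2 + α * Y ^ 2 ≤
      α₁ * X * p + α * (Y * r) + M * Z * p + M * q * X := by
    have hCS' : α * (inner ℝ (lam - lamh) (lam - μh) : ℝ) ≤ α * (Y * r) :=
      mul_le_mul_of_nonneg_left hCS hα.le
    have hinner' : α * (inner ℝ (lam - lamh) (lam - lamh) : ℝ) = α * Y ^ 2 := by rw [hinner]
    linarith [hid, hcoer, hinner', hCS', ha1, hb1, hb2]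
  -- combined estimate with inf-sup inserted
  have hA2 : β * α₂ * X ^ 2 + β * (α * Y ^ 2) ≤
      (β * α₁ + M * α₁) * (X * p) + β * (α * (Y * r))
        + M * (M + β) * (q * p) + β * M * (q * X) := by
    have m1 := mul_le_mul_of_nonneg_left hA hβ.le
    have m2 := mul_le_mul_of_nonneg_left hB (mul_nonneg hM.le hpn)
    linarith [m1, m2]
  -- Young's inequality step
  have hS : 2*(α₂*β)^2*X^2 + 2*α₂*β^2*(α*Y^2) ≤
      (4*((β+M)*α₁)^2 + 2*α₂*β*(M*(M+β)) + 4*(β*M)^2)*p^2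
      + (4*((β+M)*α₁)^2 + 2*α₂*β*(M*(M+β)) + 4*(β*M)^2)*q^2 + 2*α₂*β^2*(α*r^2) := by
    have m := mul_le_mul_of_nonneg_left hA2 (by positivity : (0:ℝ) ≤ 4*α₂*β)
    linarith [m, sq_nonneg (α₂*β*X - 2*((β+M)*α₁)*p), sq_nonneg (α₂*β*X - 2*(β*M)*q),
      mul_nonneg (by positivity : (0:ℝ) ≤ 2*α₂*β*(M*(M+β))) (sq_nonneg (q-p)),
      mul_nonneg (mul_nonneg (by positivity : (0:ℝ) ≤ 2*α₂*β^2) hα.le) (sq_nonneg (Y-r)),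
      mul_nonneg (sq_nonneg ((β+M)*α₁)) (sq_nonneg q),
      mul_nonneg (sq_nonneg (β*M)) (sq_nonneg p)]
  -- Z bound squared
  have hZp : β^2 * Z^2 ≤ 2*α₁^2*X^2 + 2*(M+β)^2*q^2 := by
    have hsum : (0:ℝ) ≤ α₁*X + (M+β)*q + β*Z := by positivity
    linarith [mul_nonneg (sub_nonneg.mpr hB) hsum, sq_nonneg (α₁*X - (M+β)*q)]
  -- final combination
  rw [div_mul_eq_mul_div, le_div_iff₀ (by positivity : (0:ℝ) < 2*α₂^2*β^4)]
  have m1 := mul_le_mul_of_nonneg_left hS (by positivity : (0:ℝ) ≤ β^2)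
  have m2 := mul_le_mul_of_nonneg_left hS (by positivity : (0:ℝ) ≤ 2*α₁^2)
  have m3 := mul_le_mul_of_nonneg_left hS (by positivity : (0:ℝ) ≤ α₂*β^2)
  have m4 := mul_le_mul_of_nonneg_left hZp (by positivity : (0:ℝ) ≤ 2*α₂^2*β^2)
  have sY1 : (0:ℝ) ≤ 2*α₂*β^4*(α*Y^2) := by positivity
  have sY2 : (0:ℝ) ≤ 4*α₁^2*α₂*β^2*(α*Y^2) := by positivity
  have sX3 : (0:ℝ) ≤ 2*α₂^3*β^4*X^2 := by positivity
  have sp1 : (0:ℝ) ≤ (4*α₂^2*β^2*(M+β)^2 + 2*α₂*β^4 + 4*α₁^2*α₂*β^2 + 2*α₂^2*β^4) * p^2 := by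
    positivity
  have sq1 : (0:ℝ) ≤ (2*α₂*β^4 + 4*α₁^2*α₂*β^2 + 2*α₂^2*β^4) * q^2 := by positivity
  have sr1 : (0:ℝ) ≤ ((β^2+2*α₁^2+α₂*β^2)*(4*((β+M)*α₁)^2 + 2*α₂*β*(M*(M+β)) + 4*(β*M)^2)
      + 4*α₂^2*β^2*(M+β)^2) * (α*r^2) := by positivity
  linarith [m1, m2, m3, m4, sY1, sY2, sX3, sp1, sq1, sr1]
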